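/- Relative Lipschitzness of the Fenchel game: let f : ℝᵈ → ℝ be L-smooth and μ-strongly convex in the Euclidean norm, with Fenchel conjugate f*. Define g(x,y) := (y, ∇f*(y) - x) and r(x,y) := (μ/2)‖x‖² + f*(y). Then for all z = (zˣ,zʸ), w = (wˣ,wʸ), u = (uˣ,uʸ): ⟨g(w) - g(z), w - u⟩ ≤ (1 + √(L/μ))(V^r_z(w) + V^r_w(u)). -/

import Mathlib

open scoped RealInnerProductSpace

private lemma inner_amgm_aux {d : ℕ} (a b : EuclideanSpace ℝ (Fin d)) {l : ℝ} (hl : 0 < l) :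
    ⟪a, b⟫ ≤ l / 2 * ‖a‖ ^ 2 + 1 / (2 * l) * ‖b‖ ^ 2 := by
  have h1 := real_inner_le_norm a b
  have h3 : 0 ≤ (l * ‖a‖ - ‖b‖) ^ 2 / (2 * l) := by positivity
  have h4 : (l * ‖a‖ - ‖b‖) ^ 2 / (2 * l)
      = l / 2 * ‖a‖ ^ 2 + 1 / (2 * l) * ‖b‖ ^ 2 - ‖a‖ * ‖b‖ := by
    field_simp
    ring
  linarith [h3, h4 ▸ h3]

/-- Relative Lipschitzness for the Fenchel game (Lemma 2): for `f : ℝᵈ → ℝ` `L`-smooth and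
`μ`-strongly convex with conjugate `fs` (which is `(1/L)`-strongly convex with gradient `fs'`),
the operator `g(x,y) = (y, ∇f*(y) - x)` is `(1 + √(L/μ))`-relatively Lipschitz with respect to
`r(x,y) = (μ/2)‖x‖² + f*(y)`, stated blockwise. -/
theorem fenchel_game_rel_lipschitz {d : ℕ}
    (fs : EuclideanSpace ℝ (Fin d) → ℝ)
    (fs' : EuclideanSpace ℝ (Fin d) → EuclideanSpace ℝ (Fin d))
    (μ L : ℝ) (hμ : 0 < μ) (hμL : μ ≤ L)
    (hfsdiff : ∀ y, HasGradientAt fs (fs' y) y)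
    (hfssc : ∀ a b, fs a + ⟪fs' a, b - a⟫ + 1 / (2 * L) * ‖b - a‖ ^ 2 ≤ fs b)
    (Vfs : EuclideanSpace ℝ (Fin d) → EuclideanSpace ℝ (Fin d) → ℝ)
    (hVfs : ∀ a b, Vfs a b = fs b - fs a - ⟪fs' a, b - a⟫)
    (Vr : (EuclideanSpace ℝ (Fin d) × EuclideanSpace ℝ (Fin d)) →
      (EuclideanSpace ℝ (Fin d) × EuclideanSpace ℝ (Fin d)) → ℝ)
    (hVr : ∀ z w, Vr z w = μ / 2 * ‖w.1 - z.1‖ ^ 2 + Vfs z.2 w.2) :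
    ∀ z w u : EuclideanSpace ℝ (Fin d) × EuclideanSpace ℝ (Fin d),
      ⟪w.2 - z.2, w.1 - u.1⟫ + ⟪(fs' w.2 - w.1) - (fs' z.2 - z.1), w.2 - u.2⟫ ≤
        (1 + Real.sqrt (L / μ)) * (Vr z w + Vr w u) := by
  have hL : 0 < L := lt_of_lt_of_le hμ hμL
  set s := Real.sqrt (L / μ) with hs
  have hs0 : 0 < s := Real.sqrt_pos.mpr (div_pos hL hμ)
  have hs2 : s ^ 2 = L / μ := Real.sq_sqrt (le_of_lt (div_pos hL hμ))
  have hsL : s ^ 2 * μ = L := by rw [hs2]; field_simp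
  have hsμ : 0 < s * μ := mul_pos hs0 hμ
  have hcoef : 1 / (2 * (s * μ)) = s / (2 * L) := by
    rw [← hsL]; field_simp
  rintro ⟨z1, z2⟩ ⟨w1, w2⟩ ⟨u1, u2⟩
  simp only [hVr]
  -- three-point identity
  have E3 : ⟪fs' w2 - fs' z2, w2 - u2⟫
      = Vfs z2 w2 + Vfs w2 u2 - Vfs z2 u2 := by
    rw [hVfs, hVfs, hVfs]
    simp only [inner_sub_left, inner_sub_right]
    ring
  have F1 : 1 / (2 * L) * ‖w2 - z2‖ ^ 2 ≤ Vfs z2 w2 := by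
    have := hfssc z2 w2; rw [hVfs]; linarith
  have F2 : 1 / (2 * L) * ‖w2 - u2‖ ^ 2 ≤ Vfs w2 u2 := by
    have := hfssc w2 u2; rw [hVfs, norm_sub_rev]; linarith
  have F3 : 0 ≤ Vfs z2 u2 := by
    have h := hfssc z2 u2
    have : 0 ≤ 1 / (2 * L) * ‖u2 - z2‖ ^ 2 := by positivity
    rw [hVfs]; linarith
  have G1 : 1 / (2 * (s * μ)) * ‖w2 - z2‖ ^ 2 ≤ s * Vfs z2 w2 := by
    rw [hcoef]
    have h := mul_le_mul_of_nonneg_left F1 hs0.le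
    calc s / (2 * L) * ‖w2 - z2‖ ^ 2 = s * (1 / (2 * L) * ‖w2 - z2‖ ^ 2) := by ring
      _ ≤ s * Vfs z2 w2 := h
  have G2 : 1 / (2 * (s * μ)) * ‖w2 - u2‖ ^ 2 ≤ s * Vfs w2 u2 := by
    rw [hcoef]
    have h := mul_le_mul_of_nonneg_left F2 hs0.le
    calc s / (2 * L) * ‖w2 - u2‖ ^ 2 = s * (1 / (2 * L) * ‖w2 - u2‖ ^ 2) := by ring
      _ ≤ s * Vfs w2 u2 := h
  have E1 : ⟪w2 - z2, w1 - u1⟫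
      ≤ s * μ / 2 * ‖u1 - w1‖ ^ 2 + 1 / (2 * (s * μ)) * ‖w2 - z2‖ ^ 2 := by
    rw [real_inner_comm, norm_sub_rev u1 w1]
    have h := inner_amgm_aux (w1 - u1) (w2 - z2) hsμ
    linarith
  have E2 : ⟪z1 - w1, w2 - u2⟫
      ≤ s * μ / 2 * ‖w1 - z1‖ ^ 2 + 1 / (2 * (s * μ)) * ‖w2 - u2‖ ^ 2 := by
    rw [norm_sub_rev w1 z1]
    have h := inner_amgm_aux (z1 - w1) (w2 - u2) hsμ
    linarith
  have hvec : (fs' w2 - w1) - (fs' z2 - z1) = (fs' w2 - fs' z2) + (z1 - w1) := by abel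
  rw [hvec, inner_add_left]
  have pos1 : 0 ≤ μ / 2 * ‖w1 - z1‖ ^ 2 := by positivity
  have pos2 : 0 ≤ μ / 2 * ‖u1 - w1‖ ^ 2 := by positivity
  nlinarith [E1, E2, E3, G1, G2, F3, pos1, pos2]
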